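/- Let a, b ∈ ℂ^m both be nonzero, and let W := [a b]†[a b] be the 2×2 Hermitian positive-semidefinite Gram matrix with eigenvalues λ1 ≥ λ2 ≥ 0. Then 1 ≥ λ1/(λ1 + λ2) ≥ 1/2 + |a†b| / (2·‖a‖·‖b‖). Equivalently, for real numbers f11, f22 > 0 and D ≥ 0 with D² ≤ f11·f22, writing S = f11 + f22 and P = f11·f22: 1 ≥ 1/2 + (1/2)·√((S² − 4P + 4D²)/S²) ≥ 1/2 + D/(2·√P). -/

import Mathlib

open Matrix

lemma myTrace {n : Type*} [Fintype n] [DecidableEq n] {A : Matrix n n ℂ}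
    (hA : A.IsHermitian) : A.trace = ∑ i, (hA.eigenvalues i : ℂ) := by
  conv_lhs => rw [hA.spectral_theorem]
  rw [Unitary.conjStarAlgAut_apply]
  rw [Matrix.trace_mul_cycle, (Matrix.mem_unitaryGroup_iff').mp (IsHermitian.eigenvectorUnitary hA).2,
    one_mul, Matrix.trace_diagonal]
  simp

lemma myKey (f11 f22 D : ℝ) (hf11 : 0 < f11) (hf22 : 0 < f22) (hD0 : 0 ≤ D)
    (hCS : D ^ 2 ≤ f11 * f22) :
    D / Real.sqrt (f11 * f22) ≤
      Real.sqrt (((f11 + f22) ^ 2 - 4 * (f11 * f22) + 4 * D ^ 2) / (f11 + f22) ^ 2) ∧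
    Real.sqrt (((f11 + f22) ^ 2 - 4 * (f11 * f22) + 4 * D ^ 2) / (f11 + f22) ^ 2) ≤ 1 := by
  have hP : 0 < f11 * f22 := mul_pos hf11 hf22
  have hS : 0 < f11 + f22 := by linarith
  have hS2 : 0 < (f11 + f22) ^ 2 := by positivity
  have hsP : 0 < Real.sqrt (f11 * f22) := Real.sqrt_pos.2 hP
  have hnum : 0 ≤ (f11 + f22) ^ 2 - 4 * (f11 * f22) + 4 * D ^ 2 := by
    nlinarith [sq_nonneg (f11 - f22)]
  constructor
  · rw [Real.le_sqrt (by positivity)]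
    · rw [div_pow, Real.sq_sqrt hP.le, div_le_div_iff₀ hP hS2]
      nlinarith [sq_nonneg (f11 - f22), mul_nonneg (sub_nonneg.2 hCS) (sq_nonneg (f11 - f22))]
    · positivity
  · rw [show (1:ℝ) = Real.sqrt 1 by simp]
    apply Real.sqrt_le_sqrt
    rw [div_le_one hS2]
    linarith


open scoped ComplexOrder in
lemma myNonneg {k m : ℕ} (M : Matrix (Fin m) (Fin k) ℂ) (h : (Mᴴ * M).IsHermitian)
    (i : Fin k) : 0 ≤ h.eigenvalues i :=
  Matrix.eigenvalues_conjTranspose_mul_self_nonneg M i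

/-- For nonzero `a, b ∈ ℂ^m` with Gram matrix `W = [a b]†[a b]` of eigenvalues
`λ1 ≥ λ2 ≥ 0`: `1 ≥ λ1/(λ1+λ2) ≥ 1/2 + |a†b|/(2‖a‖‖b‖)` (ERR ≥ IoS*); equivalently,
for reals `f11, f22 > 0`, `D ≥ 0` with `D² ≤ f11·f22`, writing `S = f11 + f22` and
`P = f11·f22`: `1 ≥ 1/2 + (1/2)√((S²−4P+4D²)/S²) ≥ 1/2 + D/(2√P)`. -/
theorem stmt17 {m : ℕ} (a b : Fin m → ℂ) (ha : a ≠ 0) (hb : b ≠ 0)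
    (M : Matrix (Fin m) (Fin 2) ℂ) (hM : M = Matrix.of fun i j => ![a i, b i] j)
    (W : Matrix (Fin 2) (Fin 2) ℂ) (hW : W = Mᴴ * M)
    (hHerm : W.IsHermitian)
    (lam1 lam2 : ℝ)
    (hlam1 : lam1 = max (hHerm.eigenvalues 0) (hHerm.eigenvalues 1))
    (hlam2 : lam2 = min (hHerm.eigenvalues 0) (hHerm.eigenvalues 1))
    (f11 f22 D : ℝ) (hf11 : 0 < f11) (hf22 : 0 < f22) (hD0 : 0 ≤ D)
    (hCS : D ^ 2 ≤ f11 * f22) :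
    (1 ≥ lam1 / (lam1 + lam2) ∧
      lam1 / (lam1 + lam2) ≥
        1 / 2 + ‖∑ i, (starRingEnd ℂ) (a i) * b i‖ /
          (2 * Real.sqrt (∑ i, ‖a i‖ ^ 2) *
            Real.sqrt (∑ i, ‖b i‖ ^ 2))) ∧
    (1 ≥ 1 / 2 + (1 / 2) *
        Real.sqrt (((f11 + f22) ^ 2 - 4 * (f11 * f22) + 4 * D ^ 2) / (f11 + f22) ^ 2) ∧
      1 / 2 + (1 / 2) *
          Real.sqrt (((f11 + f22) ^ 2 - 4 * (f11 * f22) + 4 * D ^ 2) / (f11 + f22) ^ 2) ≥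
        1 / 2 + D / (2 * Real.sqrt (f11 * f22))) := by
  subst hW
  obtain ⟨hk1, hk2⟩ := myKey f11 f22 D hf11 hf22 hD0 hCS
  set A := ∑ i, ‖a i‖ ^ 2 with hAdef
  set B := ∑ i, ‖b i‖ ^ 2 with hBdef
  set d := ‖∑ i, (starRingEnd ℂ) (a i) * b i‖ with hddef
  have hd0 : 0 ≤ d := norm_nonneg _
  have hA0 : 0 < A := by
    obtain ⟨i, hi⟩ := Function.ne_iff.mp ha
    exact Finset.sum_pos' (fun j _ => by positivity)
      ⟨i, Finset.mem_univ i, by simpa using pow_pos (norm_pos_iff.mpr hi) 2⟩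
  have hB0 : 0 < B := by
    obtain ⟨i, hi⟩ := Function.ne_iff.mp hb
    exact Finset.sum_pos' (fun j _ => by positivity)
      ⟨i, Finset.mem_univ i, by simpa using pow_pos (norm_pos_iff.mpr hi) 2⟩
  set e0 := hHerm.eigenvalues 0 with he0
  set e1 := hHerm.eigenvalues 1 with he1
  -- entries of W
  have hW00 : (Mᴴ * M) 0 0 = (A : ℂ) := by
    simp only [hM, Matrix.mul_apply, Matrix.conjTranspose_apply, Matrix.of_apply]
    push_cast [hAdef]
    congr 1; ext i
    rw [mul_comm]
    rw [show star (a i) = (starRingEnd ℂ) (a i) from rfl, Complex.mul_conj]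
    norm_cast
    exact (Complex.sq_norm _).symm
  have hW11 : (Mᴴ * M) 1 1 = (B : ℂ) := by
    simp only [hM, Matrix.mul_apply, Matrix.conjTranspose_apply, Matrix.of_apply]
    push_cast [hBdef]
    congr 1; ext i
    rw [mul_comm]
    rw [show star (b i) = (starRingEnd ℂ) (b i) from rfl, Complex.mul_conj]
    norm_cast
    exact (Complex.sq_norm _).symm
  have hW01 : (Mᴴ * M) 0 1 = ∑ i, (starRingEnd ℂ) (a i) * b i := by
    simp [hM, Matrix.mul_apply, Matrix.conjTranspose_apply]
  have hW10 : (Mᴴ * M) 1 0 = (starRingEnd ℂ) (∑ i, (starRingEnd ℂ) (a i) * b i) := by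
    simp [hM, Matrix.mul_apply, Matrix.conjTranspose_apply, mul_comm]
  -- trace and det
  have htr : e0 + e1 = A + B := by
    have h1 : (Mᴴ * M).trace = ((e0 + e1 : ℝ) : ℂ) := by
      rw [myTrace hHerm, Fin.sum_univ_two, ← he0, ← he1]; push_cast; ring
    have h2 : (Mᴴ * M).trace = ((A + B : ℝ) : ℂ) := by
      rw [Matrix.trace_fin_two, hW00, hW11]; push_cast; ring
    exact_mod_cast h1.symm.trans h2
  have hdet : e0 * e1 = A * B - d ^ 2 := by
    have h1 : (Mᴴ * M).det = ((e0 * e1 : ℝ) : ℂ) := by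
      rw [hHerm.det_eq_prod_eigenvalues, Fin.prod_univ_two, ← he0, ← he1]; push_cast; rfl
    have h2 : (Mᴴ * M).det = ((A * B - d ^ 2 : ℝ) : ℂ) := by
      rw [Matrix.det_fin_two, hW00, hW11, hW01, hW10]
      rw [Complex.mul_conj, hddef]
      push_cast [Complex.normSq_eq_norm_sq]
      ring
    exact_mod_cast h1.symm.trans h2
  have he0nn : 0 ≤ e0 := he0 ▸ myNonneg M hHerm 0
  have he1nn : 0 ≤ e1 := he1 ▸ myNonneg M hHerm 1
  clear_value e0 e1 A B d
  clear hW00 hW11 hW01 hW10 hM hAdef hBdef hddef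
  have hsum : lam1 + lam2 = A + B := by
    rw [hlam1, hlam2, ← htr]
    rcases le_total e0 e1 with h | h <;>
      simp [max_eq_right, max_eq_left, min_eq_left, min_eq_right, h] <;> ring
  have hprod : lam1 * lam2 = A * B - d ^ 2 := by
    rw [hlam1, hlam2, ← hdet]
    rcases le_total e0 e1 with h | h <;>
      simp [max_eq_right, max_eq_left, min_eq_left, min_eq_right, h] <;> ring
  have hlamle : lam2 ≤ lam1 := by rw [hlam1, hlam2]; exact min_le_max
  have hlam2nn : 0 ≤ lam2 := by rw [hlam2]; exact le_min he0nn he1nn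
  have hS : 0 < lam1 + lam2 := by rw [hsum]; linarith
  have hdCS : d ^ 2 ≤ A * B := by nlinarith
  refine ⟨⟨?_, ?_⟩, ?_, ?_⟩
  · rw [ge_iff_le, div_le_one hS]; linarith
  · obtain ⟨hk1', _⟩ := myKey A B d hA0 hB0 hd0 hdCS
    have hXeq : ((A + B) ^ 2 - 4 * (A * B) + 4 * d ^ 2) / (A + B) ^ 2
        = ((lam1 - lam2) / (A + B)) ^ 2 := by
      rw [div_pow]
      congr 1
      nlinarith [hsum, hprod]
    rw [hXeq, Real.sqrt_sq (div_nonneg (by linarith) (by linarith)), Real.sqrt_mul hA0.le] at hk1'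
    have key2 : lam1 / (lam1 + lam2) = 1 / 2 + (1 / 2) * ((lam1 - lam2) / (A + B)) := by
      rw [← hsum]
      field_simp
      ring
    have hrw : d / (2 * Real.sqrt A * Real.sqrt B)
        = (1 / 2) * (d / (Real.sqrt A * Real.sqrt B)) := by ring
    rw [ge_iff_le, key2, hrw]
    linarith
  · rw [ge_iff_le]; linarith
  · rw [ge_iff_le]
    have : D / (2 * Real.sqrt (f11 * f22)) = (1 / 2) * (D / Real.sqrt (f11 * f22)) := by ring
    rw [this]
    linarith
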